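/- For every δ with 0 < δ < 1/200 there exists k₀ ≥ 1 (depending only on δ) such that the following holds for every real k ≥ k₀. Let A be a normed ring, and let a, d ∈ A satisfy ‖a‖ ≤ 2k^{2δ}, ‖a³‖ ≤ 2k^{−1/5+21δ}, and ‖d‖ ≤ 4k^{−1−δ}. Then for every integer r ≥ 1, ‖(a+d)^r − a^r‖ ≤ 8^r · ‖d‖ · k^{8δ} · k^{−(1/5−21δ)·⌊max(r−3,0)/3⌋}. -/
import Mathlib

private lemma tele {A : Type*} [Ring A] (a b : A) (r : ℕ) :
    b ^ r - a ^ r = ∑ j ∈ Finset.range r, b ^ j * (b - a) * a ^ (r - 1 - j) := by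
  induction r with
  | zero => simp
  | succ n ih =>
    rw [Finset.sum_range_succ]
    have h1 : ∀ j ∈ Finset.range n, b ^ j * (b - a) * a ^ (n + 1 - 1 - j)
        = (b ^ j * (b - a) * a ^ (n - 1 - j)) * a := by
      intro j hj
      rw [Finset.mem_range] at hj
      have h2 : n + 1 - 1 - j = (n - 1 - j) + 1 := by omega
      rw [h2, pow_succ, ← mul_assoc]
    rw [Finset.sum_congr rfl h1, ← Finset.sum_mul, ← ih]
    have h3 : n + 1 - 1 - n = 0 := by omega
    rw [h3, pow_zero, mul_one, pow_succ, pow_succ]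
    noncomm_ring

private lemma powL {A : Type*} [NormedRing A] (x : A) (M : ℝ) (hM : 0 ≤ M) (hx : ‖x‖ ≤ M) :
    ∀ (s : ℕ) (y : A), ‖x ^ s * y‖ ≤ M ^ s * ‖y‖ := by
  intro s
  induction s with
  | zero => intro y; simp
  | succ n ih =>
    intro y
    have h1 : x ^ (n + 1) * y = x ^ n * (x * y) := by rw [pow_succ, mul_assoc]
    rw [h1]
    calc ‖x ^ n * (x * y)‖ ≤ M ^ n * ‖x * y‖ := ih (x * y)
      _ ≤ M ^ n * (M * ‖y‖) := by
          refine mul_le_mul_of_nonneg_left ?_ (pow_nonneg hM n)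
          exact le_trans (norm_mul_le x y) (mul_le_mul_of_nonneg_right hx (norm_nonneg y))
      _ = M ^ (n + 1) * ‖y‖ := by rw [pow_succ]; ring

private lemma powR {A : Type*} [NormedRing A] (x : A) (M : ℝ) (hM : 0 ≤ M) (hx : ‖x‖ ≤ M) :
    ∀ (s : ℕ) (y : A), ‖y * x ^ s‖ ≤ ‖y‖ * M ^ s := by
  intro s
  induction s with
  | zero => intro y; simp
  | succ n ih =>
    intro y
    have h1 : y * x ^ (n + 1) = (y * x) * x ^ n := by rw [pow_succ']; noncomm_ring
    rw [h1]
    calc ‖(y * x) * x ^ n‖ ≤ ‖y * x‖ * M ^ n := ih (y * x)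
      _ ≤ (‖y‖ * M) * M ^ n := by
          refine mul_le_mul_of_nonneg_right ?_ (pow_nonneg hM n)
          exact le_trans (norm_mul_le y x) (mul_le_mul_of_nonneg_left hx (norm_nonneg y))
      _ = ‖y‖ * M ^ (n + 1) := by rw [pow_succ]; ring

private lemma cubeL {A : Type*} [NormedRing A] (x : A) (M m : ℝ) (hM : 1 ≤ M) (hm : 0 ≤ m)
    (hx : ‖x‖ ≤ M) (hx3 : ‖x ^ 3‖ ≤ m) (j : ℕ) (y : A) :
    ‖x ^ j * y‖ ≤ M ^ 2 * m ^ (j / 3) * ‖y‖ := by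
  have hM0 : (0 : ℝ) ≤ M := le_trans zero_le_one hM
  have hsplit : x ^ j = (x ^ 3) ^ (j / 3) * x ^ (j % 3) := by
    rw [← pow_mul, ← pow_add]
    congr 1
    omega
  rw [hsplit, mul_assoc]
  calc ‖(x ^ 3) ^ (j / 3) * (x ^ (j % 3) * y)‖
      ≤ m ^ (j / 3) * ‖x ^ (j % 3) * y‖ := powL (x ^ 3) m hm hx3 _ _
    _ ≤ m ^ (j / 3) * (M ^ (j % 3) * ‖y‖) :=
        mul_le_mul_of_nonneg_left (powL x M hM0 hx _ _) (pow_nonneg hm _)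
    _ ≤ m ^ (j / 3) * (M ^ 2 * ‖y‖) := by
        refine mul_le_mul_of_nonneg_left (mul_le_mul_of_nonneg_right ?_ (norm_nonneg y))
          (pow_nonneg hm _)
        exact pow_le_pow_right₀ hM (by omega)
    _ = M ^ 2 * m ^ (j / 3) * ‖y‖ := by ring

private lemma cubeR {A : Type*} [NormedRing A] (x : A) (M m : ℝ) (hM : 1 ≤ M) (hm : 0 ≤ m)
    (hx : ‖x‖ ≤ M) (hx3 : ‖x ^ 3‖ ≤ m) (j : ℕ) (y : A) :
    ‖y * x ^ j‖ ≤ ‖y‖ * (M ^ 2 * m ^ (j / 3)) := by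
  have hM0 : (0 : ℝ) ≤ M := le_trans zero_le_one hM
  have hsplit : x ^ j = x ^ (j % 3) * (x ^ 3) ^ (j / 3) := by
    rw [← pow_mul, ← pow_add]
    congr 1
    omega
  rw [hsplit, ← mul_assoc]
  calc ‖(y * x ^ (j % 3)) * (x ^ 3) ^ (j / 3)‖
      ≤ ‖y * x ^ (j % 3)‖ * m ^ (j / 3) := powR (x ^ 3) m hm hx3 _ _
    _ ≤ (‖y‖ * M ^ (j % 3)) * m ^ (j / 3) :=
        mul_le_mul_of_nonneg_right (powR x M hM0 hx _ _) (pow_nonneg hm _)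
    _ ≤ (‖y‖ * M ^ 2) * m ^ (j / 3) := by
        refine mul_le_mul_of_nonneg_right (mul_le_mul_of_nonneg_left ?_ (norm_nonneg y))
          (pow_nonneg hm _)
        exact pow_le_pow_right₀ hM (by omega)
    _ = ‖y‖ * (M ^ 2 * m ^ (j / 3)) := by ring

private lemma nat144 : ∀ r : ℕ, 6 ≤ r → 144 * r ≤ 4 ^ r := by
  intro r hr
  induction r, hr using Nat.le_induction with
  | base => norm_num
  | succ n hn ih =>
    calc 144 * (n + 1) ≤ 2 * (144 * n) := by omega
      _ ≤ 2 * 4 ^ n := by omega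
      _ ≤ 4 ^ (n + 1) := by rw [pow_succ]; omega

private lemma nat_main (r : ℕ) (hr : 6 ≤ r) : 144 * r * 4 ^ ((r - 1) / 3) ≤ 8 ^ r := by
  have h1 : (4 : ℕ) ^ ((r - 1) / 3) ≤ 2 ^ r := by
    have : (4 : ℕ) ^ ((r - 1) / 3) = 2 ^ (2 * ((r - 1) / 3)) := by
      rw [pow_mul]; norm_num
    rw [this]
    exact Nat.pow_le_pow_right (by norm_num) (by omega)
  calc 144 * r * 4 ^ ((r - 1) / 3) ≤ 144 * r * 2 ^ r :=
        Nat.mul_le_mul_left _ h1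
    _ ≤ 4 ^ r * 2 ^ r := Nat.mul_le_mul_right _ (nat144 r hr)
    _ = 8 ^ r := by rw [← Nat.mul_pow]

set_option maxHeartbeats 2000000 in
/-- Abstract form of the perturbative step (3.39)–(3.40): if `‖a‖ ≤ 2k^{2δ}`,
`‖a³‖ ≤ 2k^{−1/5+21δ}` and `‖d‖ ≤ 4k^{−1−δ}` in a normed ring, then for all `r ≥ 1`,
`‖(a+d)^r − a^r‖ ≤ 8^r ‖d‖ k^{8δ} k^{−(1/5−21δ)⌊max(r−3,0)/3⌋}`, provided `k` is
sufficiently large depending only on `δ ∈ (0, 1/200)`. -/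
theorem pow_perturbation_bound (δ : ℝ) (hδ0 : 0 < δ) (hδ : δ < 1 / 200) :
    ∃ k₀ : ℝ, 1 ≤ k₀ ∧ ∀ k : ℝ, k₀ ≤ k →
      ∀ (A : Type) [NormedRing A], ∀ a d : A,
        ‖a‖ ≤ 2 * k ^ (2 * δ) →
        ‖a ^ 3‖ ≤ 2 * k ^ (-(1 / 5) + 21 * δ) →
        ‖d‖ ≤ 4 * k ^ (-1 - δ) →
        ∀ r : ℕ, 1 ≤ r →
          ‖(a + d) ^ r - a ^ r‖
            ≤ 8 ^ r * ‖d‖ * k ^ (8 * δ)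
              * k ^ (-(1 / 5 - 21 * δ) * (((r - 3) / 3 : ℕ) : ℝ)) := by
  refine ⟨1000 ^ 11, by norm_num, ?_⟩
  intro k hk A _ a d ha ha3 hd r hr
  have hk1 : (1 : ℝ) ≤ k := le_trans (by norm_num) hk
  have hk0 : (0 : ℝ) < k := lt_of_lt_of_le zero_lt_one hk1
  set P : ℝ := k ^ (2 * δ) with hPdef
  set Q : ℝ := k ^ (-(1 / 5) + 21 * δ) with hQdef
  have hP1 : (1 : ℝ) ≤ P := Real.one_le_rpow hk1 (by linarith)
  have hP0 : (0 : ℝ) < P := lt_of_lt_of_le zero_lt_one hP1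
  have hQ0 : (0 : ℝ) < Q := Real.rpow_pos_of_pos hk0 _
  have hQ1 : Q ≤ 1 := Real.rpow_le_one_of_one_le_of_nonpos hk1 (by linarith)
  -- E = k^(1/11) ≥ 1000
  have hE : (1000 : ℝ) ≤ k ^ (1 / 11 : ℝ) := by
    refine le_of_pow_le_pow_left₀ (n := 11) (by norm_num)
      (Real.rpow_nonneg hk0.le _) ?_
    rw [← Real.rpow_natCast (k ^ (1 / 11 : ℝ)) 11, ← Real.rpow_mul hk0.le]
    norm_num
    exact le_trans (by norm_num) hk
  -- key exponent comparison: k^(4/5+18δ) ≥ 1000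
  have hbig : (1000 : ℝ) ≤ k ^ (4 / 5 + 18 * δ) :=
    le_trans hE (Real.rpow_le_rpow_of_exponent_le hk1 (by linarith))
  have hdk : (0 : ℝ) < k ^ (-1 - δ) := Real.rpow_pos_of_pos hk0 _
  have hd0 : (0 : ℝ) ≤ ‖d‖ := norm_nonneg d
  have hd4 : ‖d‖ ≤ 4 := by
    have : k ^ (-1 - δ) ≤ 1 := Real.rpow_le_one_of_one_le_of_nonpos hk1 (by linarith)
    nlinarith
  set b : A := a + d with hbdef
  have hba : b - a = d := by rw [hbdef]; abel
  have hb : ‖b‖ ≤ 6 * P := by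
    calc ‖b‖ ≤ ‖a‖ + ‖d‖ := norm_add_le a d
      _ ≤ 2 * P + 4 := by linarith
      _ ≤ 6 * P := by linarith
  -- P^2 * k^(-1-δ) = k^(-1+3δ), and 216 * k^(-1+3δ) ≤ Q
  have hP2k : P ^ 2 * k ^ (-1 - δ) = k ^ (-1 + 3 * δ) := by
    rw [hPdef, ← Real.rpow_natCast (k ^ (2 * δ)) 2, ← Real.rpow_mul hk0.le,
      ← Real.rpow_add hk0]
    norm_num
    ring_nf
  have hQsplit : Q = k ^ (4 / 5 + 18 * δ) * k ^ (-1 + 3 * δ) := by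
    rw [hQdef, ← Real.rpow_add hk0]
    ring_nf
  have hQlow : 216 * k ^ (-1 + 3 * δ) ≤ Q := by
    rw [hQsplit]
    have h0 : (0 : ℝ) < k ^ (-1 + 3 * δ) := Real.rpow_pos_of_pos hk0 _
    nlinarith
  -- norm of d against k^(-1+3δ)
  have hdP2 : 108 * (P ^ 2 * ‖d‖) ≤ 2 * Q := by
    have h1 : P ^ 2 * ‖d‖ ≤ P ^ 2 * (4 * k ^ (-1 - δ)) :=
      mul_le_mul_of_nonneg_left hd (by positivity)
    have h2 : P ^ 2 * (4 * k ^ (-1 - δ)) = 4 * k ^ (-1 + 3 * δ) := by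
      rw [← hP2k]; ring
    nlinarith
  -- bound on ‖b^3‖
  have hb3 : ‖b ^ 3‖ ≤ 4 * Q := by
    have htel : b ^ 3 - a ^ 3 = ∑ j ∈ Finset.range 3, b ^ j * d * a ^ (3 - 1 - j) := by
      rw [tele a b 3, hba]
    have hterm : ∀ j ∈ Finset.range 3, ‖b ^ j * d * a ^ (3 - 1 - j)‖ ≤ 36 * P ^ 2 * ‖d‖ := by
      intro j hj
      rw [Finset.mem_range] at hj
      rw [mul_assoc]
      calc ‖b ^ j * (d * a ^ (3 - 1 - j))‖
          ≤ (6 * P) ^ j * ‖d * a ^ (3 - 1 - j)‖ := powL b (6 * P) (by positivity) hb _ _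
        _ ≤ (6 * P) ^ j * (‖d‖ * (2 * P) ^ (3 - 1 - j)) := by
            refine mul_le_mul_of_nonneg_left (powR a (2 * P) (by positivity) ha _ _)
              (by positivity)
        _ ≤ (6 * P) ^ j * (‖d‖ * (6 * P) ^ (3 - 1 - j)) := by
            refine mul_le_mul_of_nonneg_left (mul_le_mul_of_nonneg_left ?_ hd0)
              (by positivity)
            exact pow_le_pow_left₀ (by positivity) (by linarith) _
        _ = (6 * P) ^ (j + (3 - 1 - j)) * ‖d‖ := by rw [pow_add]; ring
        _ ≤ (6 * P) ^ 2 * ‖d‖ := by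
            refine mul_le_mul_of_nonneg_right ?_ hd0
            exact pow_le_pow_right₀ (by linarith) (by omega)
        _ = 36 * P ^ 2 * ‖d‖ := by ring
    have hsum : ‖b ^ 3 - a ^ 3‖ ≤ 3 * (36 * P ^ 2 * ‖d‖) := by
      rw [htel]
      calc ‖∑ j ∈ Finset.range 3, b ^ j * d * a ^ (3 - 1 - j)‖
          ≤ ∑ j ∈ Finset.range 3, ‖b ^ j * d * a ^ (3 - 1 - j)‖ := norm_sum_le _ _
        _ ≤ (Finset.range 3).card • (36 * P ^ 2 * ‖d‖) :=
            Finset.sum_le_card_nsmul _ _ _ hterm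
        _ = 3 * (36 * P ^ 2 * ‖d‖) := by simp [nsmul_eq_mul]
    have hbb : a ^ 3 + (b ^ 3 - a ^ 3) = b ^ 3 := by abel
    calc ‖b ^ 3‖ = ‖a ^ 3 + (b ^ 3 - a ^ 3)‖ := by rw [hbb]
      _ ≤ ‖a ^ 3‖ + ‖b ^ 3 - a ^ 3‖ := norm_add_le _ _
      _ ≤ 2 * Q + 108 * (P ^ 2 * ‖d‖) := by linarith
      _ ≤ 2 * Q + 2 * Q := by linarith
      _ = 4 * Q := by ring
  -- rewrite the RHS of the goal
  set N : ℕ := (r - 3) / 3 with hNdef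
  have hRHS1 : k ^ (8 * δ) = P ^ 4 := by
    rw [hPdef, ← Real.rpow_natCast (k ^ (2 * δ)) 4, ← Real.rpow_mul hk0.le]
    norm_num
    ring_nf
  have hRHS2 : k ^ (-(1 / 5 - 21 * δ) * (N : ℝ)) = Q ^ N := by
    rw [hQdef, ← Real.rpow_natCast (k ^ (-(1 / 5) + 21 * δ)) N, ← Real.rpow_mul hk0.le]
    ring_nf
  rw [hRHS1, hRHS2]
  -- telescoping
  have htel : (a + d) ^ r - a ^ r = ∑ j ∈ Finset.range r, b ^ j * d * a ^ (r - 1 - j) := by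
    rw [← hbdef, tele a b r, hba]
  rw [htel]
  rcases Nat.lt_or_ge r 6 with hr6 | hr6
  · -- crude bound for r ≤ 5 : N = 0
    have hN0 : N = 0 := by omega
    have hterm : ∀ j ∈ Finset.range r,
        ‖b ^ j * d * a ^ (r - 1 - j)‖ ≤ 6 ^ (r - 1) * P ^ 4 * ‖d‖ := by
      intro j hj
      rw [Finset.mem_range] at hj
      rw [mul_assoc]
      calc ‖b ^ j * (d * a ^ (r - 1 - j))‖
          ≤ (6 * P) ^ j * ‖d * a ^ (r - 1 - j)‖ := powL b (6 * P) (by positivity) hb _ _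
        _ ≤ (6 * P) ^ j * (‖d‖ * (2 * P) ^ (r - 1 - j)) := by
            refine mul_le_mul_of_nonneg_left (powR a (2 * P) (by positivity) ha _ _)
              (by positivity)
        _ ≤ (6 * P) ^ j * (‖d‖ * (6 * P) ^ (r - 1 - j)) := by
            refine mul_le_mul_of_nonneg_left (mul_le_mul_of_nonneg_left ?_ hd0)
              (by positivity)
            exact pow_le_pow_left₀ (by positivity) (by linarith) _
        _ = (6 * P) ^ (j + (r - 1 - j)) * ‖d‖ := by rw [pow_add]; ring
        _ = (6 * P) ^ (r - 1) * ‖d‖ := by congr 2; omega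
        _ = 6 ^ (r - 1) * P ^ (r - 1) * ‖d‖ := by rw [mul_pow]
        _ ≤ 6 ^ (r - 1) * P ^ 4 * ‖d‖ := by
            refine mul_le_mul_of_nonneg_right
              (mul_le_mul_of_nonneg_left (pow_le_pow_right₀ hP1 (by omega)) (by positivity))
              hd0
    have hnum : (r : ℝ) * 6 ^ (r - 1) ≤ 8 ^ r := by
      have : r * 6 ^ (r - 1) ≤ 8 ^ r := by
        interval_cases r <;> norm_num
      calc (r : ℝ) * 6 ^ (r - 1) = ((r * 6 ^ (r - 1) : ℕ) : ℝ) := by push_cast; ring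
        _ ≤ ((8 ^ r : ℕ) : ℝ) := by exact_mod_cast this
        _ = 8 ^ r := by push_cast; ring
    calc ‖∑ j ∈ Finset.range r, b ^ j * d * a ^ (r - 1 - j)‖
        ≤ ∑ j ∈ Finset.range r, ‖b ^ j * d * a ^ (r - 1 - j)‖ := norm_sum_le _ _
      _ ≤ (Finset.range r).card • (6 ^ (r - 1) * P ^ 4 * ‖d‖) :=
          Finset.sum_le_card_nsmul _ _ _ hterm
      _ = (r : ℝ) * (6 ^ (r - 1) * P ^ 4 * ‖d‖) := by
          rw [Finset.card_range, nsmul_eq_mul]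
      _ = (r : ℝ) * 6 ^ (r - 1) * (P ^ 4 * ‖d‖) := by ring
      _ ≤ 8 ^ r * (P ^ 4 * ‖d‖) := mul_le_mul_of_nonneg_right hnum (by positivity)
      _ = 8 ^ r * ‖d‖ * P ^ 4 * Q ^ N := by rw [hN0]; ring
  · -- fine bound for r ≥ 6
    have hterm : ∀ j ∈ Finset.range r,
        ‖b ^ j * d * a ^ (r - 1 - j)‖ ≤ 144 * 4 ^ ((r - 1) / 3) * P ^ 4 * Q ^ N * ‖d‖ := by
      intro j hj
      rw [Finset.mem_range] at hj
      set i : ℕ := r - 1 - j with hidef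
      have hdiv1 : N ≤ j / 3 + i / 3 := by omega
      have hdiv2 : j / 3 + i / 3 ≤ (r - 1) / 3 := by omega
      rw [mul_assoc]
      calc ‖b ^ j * (d * a ^ i)‖
          ≤ (6 * P) ^ 2 * (4 * Q) ^ (j / 3) * ‖d * a ^ i‖ :=
            cubeL b (6 * P) (4 * Q) (by linarith) (by positivity) hb hb3 _ _
        _ ≤ (6 * P) ^ 2 * (4 * Q) ^ (j / 3) * (‖d‖ * ((2 * P) ^ 2 * (2 * Q) ^ (i / 3))) := by
            refine mul_le_mul_of_nonneg_left
              (cubeR a (2 * P) (2 * Q) (by linarith) (by positivity) ha ha3 _ _)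
              (by positivity)
        _ = 144 * P ^ 4 * (4 ^ (j / 3) * 2 ^ (i / 3)) * Q ^ (j / 3 + i / 3) * ‖d‖ := by
            rw [mul_pow, mul_pow, pow_add]; ring
        _ ≤ 144 * P ^ 4 * 4 ^ ((r - 1) / 3) * Q ^ N * ‖d‖ := by
            have h1 : (4 : ℝ) ^ (j / 3) * 2 ^ (i / 3) ≤ 4 ^ ((r - 1) / 3) := by
              calc (4 : ℝ) ^ (j / 3) * 2 ^ (i / 3) ≤ 4 ^ (j / 3) * 4 ^ (i / 3) := by
                    refine mul_le_mul_of_nonneg_left ?_ (by positivity)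
                    exact pow_le_pow_left₀ (by norm_num) (by norm_num) _
                _ = 4 ^ (j / 3 + i / 3) := by rw [pow_add]
                _ ≤ 4 ^ ((r - 1) / 3) := pow_le_pow_right₀ (by norm_num) hdiv2
            have h2 : Q ^ (j / 3 + i / 3) ≤ Q ^ N := pow_le_pow_of_le_one hQ0.le hQ1 hdiv1
            refine mul_le_mul_of_nonneg_right ?_ hd0
            calc 144 * P ^ 4 * (4 ^ (j / 3) * 2 ^ (i / 3)) * Q ^ (j / 3 + i / 3)
                ≤ 144 * P ^ 4 * 4 ^ ((r - 1) / 3) * Q ^ (j / 3 + i / 3) := by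
                  refine mul_le_mul_of_nonneg_right
                    (mul_le_mul_of_nonneg_left h1 (by positivity)) (by positivity)
              _ ≤ 144 * P ^ 4 * 4 ^ ((r - 1) / 3) * Q ^ N := by
                  refine mul_le_mul_of_nonneg_left h2 (by positivity)
        _ = 144 * 4 ^ ((r - 1) / 3) * P ^ 4 * Q ^ N * ‖d‖ := by ring
    have hnum : (r : ℝ) * (144 * 4 ^ ((r - 1) / 3)) ≤ 8 ^ r := by
      have := nat_main r hr6
      calc (r : ℝ) * (144 * 4 ^ ((r - 1) / 3)) = ((144 * r * 4 ^ ((r - 1) / 3) : ℕ) : ℝ) := by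
            push_cast; ring
        _ ≤ ((8 ^ r : ℕ) : ℝ) := by exact_mod_cast this
        _ = 8 ^ r := by push_cast; ring
    calc ‖∑ j ∈ Finset.range r, b ^ j * d * a ^ (r - 1 - j)‖
        ≤ ∑ j ∈ Finset.range r, ‖b ^ j * d * a ^ (r - 1 - j)‖ := norm_sum_le _ _
      _ ≤ (Finset.range r).card • (144 * 4 ^ ((r - 1) / 3) * P ^ 4 * Q ^ N * ‖d‖) :=
          Finset.sum_le_card_nsmul _ _ _ hterm
      _ = (r : ℝ) * (144 * 4 ^ ((r - 1) / 3)) * (P ^ 4 * Q ^ N * ‖d‖) := by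
          rw [Finset.card_range, nsmul_eq_mul]; ring
      _ ≤ 8 ^ r * (P ^ 4 * Q ^ N * ‖d‖) := by
          refine mul_le_mul_of_nonneg_right hnum (by positivity)
      _ = 8 ^ r * ‖d‖ * P ^ 4 * Q ^ N := by ring
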